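/- Let Φ ∈ ℝ^{m×N}, let I, J be disjoint index sets with δ_{|I|+|J|} < 1, and let y ∈ span(Φ_I). Let y_p = proj(y, Φ_J) be the orthogonal projection of y onto span(Φ_J). Then ‖y_p‖₂ ≤ (δ_{|I|+|J|} / (1 - δ_{max(|I|,|J|)})) ‖y‖₂. -/

import Mathlib

open scoped BigOperators

/-- Squared-sum Euclidean norm of a finite vector. -/
noncomputable def l2norm {ι : Type*} [Fintype ι] (v : ι → ℝ) : ℝ :=
  Real.sqrt (∑ i, v i ^ 2)

/-- The ℓ₁ norm of a finite vector. -/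
noncomputable def l1norm {ι : Type*} [Fintype ι] (v : ι → ℝ) : ℝ :=
  ∑ i, |v i|

/-- `Φ_I q`: the product of the column submatrix `Φ_I` with a coefficient vector `q`. -/
noncomputable def colMul {m N : ℕ} (Φ : Matrix (Fin m) (Fin N) ℝ) (I : Finset (Fin N))
    (q : I → ℝ) : Fin m → ℝ :=
  fun r => ∑ i : I, Φ r i.1 * q i

/-- `Φ_I^* y`: the transpose of the column submatrix applied to `y`. -/
noncomputable def colTMul {m N : ℕ} (Φ : Matrix (Fin m) (Fin N) ℝ) (I : Finset (Fin N))
    (y : Fin m → ℝ) : I → ℝ :=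
  fun i => ∑ r, Φ r i.1 * y r

/-- The Gram matrix `Φ_I^* Φ_I`. -/
noncomputable def gram {m N : ℕ} (Φ : Matrix (Fin m) (Fin N) ℝ) (I : Finset (Fin N)) :
    Matrix I I ℝ :=
  fun i j => ∑ r, Φ r i.1 * Φ r j.1

/-- `Φ` satisfies the restricted isometry property at sparsity `K` with parameter `δ`. -/
def IsRIP {m N : ℕ} (Φ : Matrix (Fin m) (Fin N) ℝ) (K : ℕ) (δ : ℝ) : Prop :=
  ∀ I : Finset (Fin N), I.card ≤ K → ∀ q : I → ℝ,
    (1 - δ) * ∑ i, q i ^ 2 ≤ ∑ r, (colMul Φ I q r) ^ 2 ∧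
      ∑ r, (colMul Φ I q r) ^ 2 ≤ (1 + δ) * ∑ i, q i ^ 2

/-- The RIP constant `δ_K`: the infimum of all admissible RIP parameters. -/
noncomputable def ripConst {m N : ℕ} (Φ : Matrix (Fin m) (Fin N) ℝ) (K : ℕ) : ℝ :=
  sInf {δ : ℝ | 0 ≤ δ ∧ IsRIP Φ K δ}

/-- Projection coefficients `(Φ_I^* Φ_I)⁻¹ Φ_I^* y`. -/
noncomputable def projCoeff {m N : ℕ} (Φ : Matrix (Fin m) (Fin N) ℝ) (I : Finset (Fin N))
    (y : Fin m → ℝ) : I → ℝ :=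
  (gram Φ I)⁻¹.mulVec (colTMul Φ I y)

/-- Orthogonal projection of `y` onto the column span of `Φ_I`. -/
noncomputable def projVec {m N : ℕ} (Φ : Matrix (Fin m) (Fin N) ℝ) (I : Finset (Fin N))
    (y : Fin m → ℝ) : Fin m → ℝ :=
  colMul Φ I (projCoeff Φ I y)


/-! ### Auxiliary lemmas -/

section Aux

variable {m N : ℕ}

/-- Extension of a coefficient vector on a finite index set to all of `Fin N`. -/
noncomputable def extv (S : Finset (Fin N)) (q : S → ℝ) : Fin N → ℝ :=
  fun n => if h : n ∈ S then q ⟨n, h⟩ else 0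

lemma colMul_eq_sum (Φ : Matrix (Fin m) (Fin N) ℝ) (S : Finset (Fin N)) (q : S → ℝ)
    (r : Fin m) : colMul Φ S q r = ∑ n ∈ S, Φ r n * extv S q n := by
  rw [← Finset.sum_coe_sort S (fun n => Φ r n * extv S q n)]
  refine Finset.sum_congr rfl (fun i _ => ?_)
  simp [extv, i.2, colMul]

lemma sumsq_eq_sum (S : Finset (Fin N)) (q : S → ℝ) :
    ∑ i, q i ^ 2 = ∑ n ∈ S, extv S q n ^ 2 := by
  rw [← Finset.sum_coe_sort S (fun n => extv S q n ^ 2)]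
  refine Finset.sum_congr rfl (fun i _ => ?_)
  simp [extv, i.2]

/-- RIP applied to the restriction of an arbitrary vector `v : Fin N → ℝ`. -/
lemma rip_apply {K : ℕ} {Φ : Matrix (Fin m) (Fin N) ℝ} {δ : ℝ}
    (h : IsRIP Φ K δ) {S : Finset (Fin N)} (hS : S.card ≤ K) (v : Fin N → ℝ) :
    (1 - δ) * ∑ n ∈ S, v n ^ 2 ≤ ∑ r, (∑ n ∈ S, Φ r n * v n) ^ 2 ∧
      ∑ r, (∑ n ∈ S, Φ r n * v n) ^ 2 ≤ (1 + δ) * ∑ n ∈ S, v n ^ 2 := by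
  have h2 := h S hS (fun i => v i.1)
  have e1 : (∑ r, (colMul Φ S (fun i => v i.1) r) ^ 2)
      = ∑ r, (∑ n ∈ S, Φ r n * v n) ^ 2 := by
    refine Finset.sum_congr rfl (fun r _ => ?_)
    rw [colMul, Finset.sum_coe_sort S (fun n => Φ r n * v n)]
  have e2 : (∑ i : S, (v i.1) ^ 2) = ∑ n ∈ S, v n ^ 2 :=
    Finset.sum_coe_sort S (fun n => v n ^ 2)
  rw [e1, e2] at h2
  exact h2

lemma sum_union_split {I J : Finset (Fin N)} (hIJ : Disjoint I J)
    (f g : Fin N → ℝ) :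
    ∑ n ∈ I ∪ J, (fun n => if n ∈ I then f n else g n) n
      = (∑ n ∈ I, f n) + ∑ n ∈ J, g n := by
  rw [Finset.sum_union hIJ]
  congr 1
  · exact Finset.sum_congr rfl (fun n hn => by simp [hn])
  · refine Finset.sum_congr rfl (fun n hn => ?_)
    have : n ∉ I := fun hI => (Finset.disjoint_left.mp hIJ) hI hn
    simp [this]

/-- Half-form of the cross inequality. -/
lemma rip_cross_half {K : ℕ} {Φ : Matrix (Fin m) (Fin N) ℝ} {δ : ℝ}
    (h : IsRIP Φ K δ) {I J : Finset (Fin N)} (hIJ : Disjoint I J)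
    (hK : I.card + J.card ≤ K) (v w : Fin N → ℝ) :
    ∑ r, (∑ n ∈ I, Φ r n * v n) * (∑ n ∈ J, Φ r n * w n)
      ≤ δ / 2 * ((∑ n ∈ I, v n ^ 2) + ∑ n ∈ J, w n ^ 2) := by
  have hcard : (I ∪ J).card ≤ K := by
    rw [Finset.card_union_of_disjoint hIJ]; exact hK
  set u : Fin N → ℝ := fun n => if n ∈ I then v n else w n with hu
  set u' : Fin N → ℝ := fun n => if n ∈ I then v n else -w n with hu'
  have hA : ∀ r, (∑ n ∈ I ∪ J, Φ r n * u n)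
      = (∑ n ∈ I, Φ r n * v n) + ∑ n ∈ J, Φ r n * w n := by
    intro r
    have := sum_union_split hIJ (fun n => Φ r n * v n) (fun n => Φ r n * w n)
    rw [← this]
    refine Finset.sum_congr rfl (fun n _ => ?_)
    by_cases hn : n ∈ I <;> simp [hu, hn]
  have hA' : ∀ r, (∑ n ∈ I ∪ J, Φ r n * u' n)
      = (∑ n ∈ I, Φ r n * v n) - ∑ n ∈ J, Φ r n * w n := by
    intro r
    have hsplit := sum_union_split hIJ (fun n => Φ r n * v n) (fun n => Φ r n * (-w n))
    have e : (∑ n ∈ J, Φ r n * (-w n)) = -∑ n ∈ J, Φ r n * w n := by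
      rw [← Finset.sum_neg_distrib]; exact Finset.sum_congr rfl (fun n _ => by ring)
    rw [e] at hsplit
    rw [sub_eq_add_neg, ← hsplit]
    refine Finset.sum_congr rfl (fun n _ => ?_)
    by_cases hn : n ∈ I <;> simp [hu', hn]
  have hP : (∑ n ∈ I ∪ J, u n ^ 2) = (∑ n ∈ I, v n ^ 2) + ∑ n ∈ J, w n ^ 2 := by
    have := sum_union_split hIJ (fun n => v n ^ 2) (fun n => w n ^ 2)
    rw [← this]
    refine Finset.sum_congr rfl (fun n _ => ?_)
    by_cases hn : n ∈ I <;> simp [hu, hn]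
  have hP' : (∑ n ∈ I ∪ J, u' n ^ 2) = (∑ n ∈ I, v n ^ 2) + ∑ n ∈ J, w n ^ 2 := by
    have := sum_union_split hIJ (fun n => v n ^ 2) (fun n => w n ^ 2)
    rw [← this]
    refine Finset.sum_congr rfl (fun n _ => ?_)
    by_cases hn : n ∈ I <;> simp [hu', hn]
  have h1 := (rip_apply h hcard u).2
  have h2 := (rip_apply h hcard u').1
  have e1 : (∑ r, (∑ n ∈ I ∪ J, Φ r n * u n) ^ 2)
      = ∑ r, ((∑ n ∈ I, Φ r n * v n) + ∑ n ∈ J, Φ r n * w n) ^ 2 :=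
    Finset.sum_congr rfl (fun r _ => by rw [hA r])
  have e2 : (∑ r, (∑ n ∈ I ∪ J, Φ r n * u' n) ^ 2)
      = ∑ r, ((∑ n ∈ I, Φ r n * v n) - ∑ n ∈ J, Φ r n * w n) ^ 2 :=
    Finset.sum_congr rfl (fun r _ => by rw [hA' r])
  rw [e1, hP] at h1
  rw [e2, hP'] at h2
  have key : (4 : ℝ) * ∑ r, (∑ n ∈ I, Φ r n * v n) * (∑ n ∈ J, Φ r n * w n)
      = (∑ r, ((∑ n ∈ I, Φ r n * v n) + ∑ n ∈ J, Φ r n * w n) ^ 2)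
        - ∑ r, ((∑ n ∈ I, Φ r n * v n) - ∑ n ∈ J, Φ r n * w n) ^ 2 := by
    rw [← Finset.sum_sub_distrib, Finset.mul_sum]
    exact Finset.sum_congr rfl (fun r _ => by ring)
  linarith

/-- Bilinearity-type rescaling of the cross form. -/
lemma cross_smul {Φ : Matrix (Fin m) (Fin N) ℝ} {I J : Finset (Fin N)}
    (v w : Fin N → ℝ) (c d : ℝ) :
    ∑ r, (∑ n ∈ I, Φ r n * (c * v n)) * (∑ n ∈ J, Φ r n * (d * w n))
      = c * d * ∑ r, (∑ n ∈ I, Φ r n * v n) * (∑ n ∈ J, Φ r n * w n) := by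
  rw [Finset.mul_sum]
  refine Finset.sum_congr rfl (fun r _ => ?_)
  have e1 : (∑ n ∈ I, Φ r n * (c * v n)) = c * ∑ n ∈ I, Φ r n * v n := by
    rw [Finset.mul_sum]; exact Finset.sum_congr rfl (fun n _ => by ring)
  have e2 : (∑ n ∈ J, Φ r n * (d * w n)) = d * ∑ n ∈ J, Φ r n * w n := by
    rw [Finset.mul_sum]; exact Finset.sum_congr rfl (fun n _ => by ring)
  rw [e1, e2]; ring

/-- The full cross inequality: `|⟨Φ_I v, Φ_J w⟩| ≤ δ ‖v‖ ‖w‖`. -/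
lemma rip_cross {K : ℕ} {Φ : Matrix (Fin m) (Fin N) ℝ} {δ : ℝ} (hδ0 : 0 ≤ δ)
    (h : IsRIP Φ K δ) {I J : Finset (Fin N)} (hIJ : Disjoint I J)
    (hK : I.card + J.card ≤ K) (v w : Fin N → ℝ) :
    |∑ r, (∑ n ∈ I, Φ r n * v n) * (∑ n ∈ J, Φ r n * w n)|
      ≤ δ * Real.sqrt (∑ n ∈ I, v n ^ 2) * Real.sqrt (∑ n ∈ J, w n ^ 2) := by
  set P := ∑ n ∈ I, v n ^ 2 with hPdef
  set Q := ∑ n ∈ J, w n ^ 2 with hQdef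
  have hP0 : 0 ≤ P := Finset.sum_nonneg (fun n _ => sq_nonneg _)
  have hQ0 : 0 ≤ Q := Finset.sum_nonneg (fun n _ => sq_nonneg _)
  set X := ∑ r, (∑ n ∈ I, Φ r n * v n) * (∑ n ∈ J, Φ r n * w n) with hXdef
  -- degenerate cases
  by_cases hP : P = 0
  · have hv : ∀ n ∈ I, v n = 0 := by
      intro n hn
      have := (Finset.sum_eq_zero_iff_of_nonneg (fun n _ => sq_nonneg (v n))).mp hP n hn
      exact pow_eq_zero_iff (two_ne_zero) |>.mp this
    have hX0 : X = 0 := by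
      rw [hXdef]
      refine Finset.sum_eq_zero (fun r _ => ?_)
      have : (∑ n ∈ I, Φ r n * v n) = 0 :=
        Finset.sum_eq_zero (fun n hn => by rw [hv n hn, mul_zero])
      rw [this, zero_mul]
    rw [hX0, hP]
    simp [Real.sqrt_zero]
  by_cases hQ : Q = 0
  · have hw : ∀ n ∈ J, w n = 0 := by
      intro n hn
      have := (Finset.sum_eq_zero_iff_of_nonneg (fun n _ => sq_nonneg (w n))).mp hQ n hn
      exact pow_eq_zero_iff (two_ne_zero) |>.mp this
    have hX0 : X = 0 := by
      rw [hXdef]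
      refine Finset.sum_eq_zero (fun r _ => ?_)
      have : (∑ n ∈ J, Φ r n * w n) = 0 :=
        Finset.sum_eq_zero (fun n hn => by rw [hw n hn, mul_zero])
      rw [this, mul_zero]
    rw [hX0, hQ]
    simp [Real.sqrt_zero]
  have hPpos : 0 < P := lt_of_le_of_ne hP0 (Ne.symm hP)
  have hQpos : 0 < Q := lt_of_le_of_ne hQ0 (Ne.symm hQ)
  have hsP : 0 < Real.sqrt P := Real.sqrt_pos.mpr hPpos
  have hsQ : 0 < Real.sqrt Q := Real.sqrt_pos.mpr hQpos
  -- normalized vectors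
  set c := (Real.sqrt P)⁻¹ with hc
  set d := (Real.sqrt Q)⁻¹ with hd
  have hPc : (∑ n ∈ I, (c * v n) ^ 2) = 1 := by
    have : (∑ n ∈ I, (c * v n) ^ 2) = c ^ 2 * P := by
      rw [hPdef, Finset.mul_sum]
      exact Finset.sum_congr rfl (fun n _ => by ring)
    rw [this, hc]
    rw [inv_pow, Real.sq_sqrt hP0]
    exact inv_mul_cancel₀ (ne_of_gt hPpos)
  have hQd : (∑ n ∈ J, (d * w n) ^ 2) = 1 := by
    have : (∑ n ∈ J, (d * w n) ^ 2) = d ^ 2 * Q := by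
      rw [hQdef, Finset.mul_sum]
      exact Finset.sum_congr rfl (fun n _ => by ring)
    rw [this, hd]
    rw [inv_pow, Real.sq_sqrt hQ0]
    exact inv_mul_cancel₀ (ne_of_gt hQpos)
  have habs : ∀ v' w' : Fin N → ℝ, (∑ n ∈ I, v' n ^ 2) = 1 → (∑ n ∈ J, w' n ^ 2) = 1 →
      |∑ r, (∑ n ∈ I, Φ r n * v' n) * (∑ n ∈ J, Φ r n * w' n)| ≤ δ := by
    intro v' w' h1 h2
    have hup := rip_cross_half h hIJ hK v' w'
    have hdn := rip_cross_half h hIJ hK v' (fun n => -w' n)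
    have e : (∑ r, (∑ n ∈ I, Φ r n * v' n) * (∑ n ∈ J, Φ r n * (-w' n)))
        = -∑ r, (∑ n ∈ I, Φ r n * v' n) * (∑ n ∈ J, Φ r n * w' n) := by
      rw [← Finset.sum_neg_distrib]
      refine Finset.sum_congr rfl (fun r _ => ?_)
      have : (∑ n ∈ J, Φ r n * (-w' n)) = -∑ n ∈ J, Φ r n * w' n := by
        rw [← Finset.sum_neg_distrib]; exact Finset.sum_congr rfl (fun n _ => by ring)
      rw [this]; ring
    have e2 : (∑ n ∈ J, (-w' n) ^ 2) = 1 := by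
      rw [← h2]; exact Finset.sum_congr rfl (fun n _ => by ring)
    rw [h1, h2] at hup
    rw [e, e2, h1] at hdn
    rw [abs_le]
    constructor <;> [linarith; linarith]
  have hmain := habs (fun n => c * v n) (fun n => d * w n) hPc hQd
  rw [cross_smul v w c d] at hmain
  rw [abs_mul, abs_mul, abs_of_pos (by positivity : (0:ℝ) < c),
    abs_of_pos (by positivity : (0:ℝ) < d)] at hmain
  have : |X| ≤ δ * (Real.sqrt P * Real.sqrt Q) := by
    rw [hc, hd] at hmain
    have h' : (Real.sqrt P)⁻¹ * (Real.sqrt Q)⁻¹ * |X| ≤ δ := by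
      rw [← hXdef] at hmain; linarith [hmain]
    calc |X| = (Real.sqrt P * Real.sqrt Q) * ((Real.sqrt P)⁻¹ * (Real.sqrt Q)⁻¹ * |X|) := by
          field_simp
      _ ≤ (Real.sqrt P * Real.sqrt Q) * δ := by
          apply mul_le_mul_of_nonneg_left h' (by positivity)
      _ = δ * (Real.sqrt P * Real.sqrt Q) := by ring
  linarith [this]

end Aux

section Aux2

open scoped Matrix

variable {m N : ℕ}

lemma gram_dot (Φ : Matrix (Fin m) (Fin N) ℝ) (J : Finset (Fin N)) (x : J → ℝ) :
    x ⬝ᵥ ((gram Φ J) *ᵥ x) = ∑ r, (colMul Φ J x r) ^ 2 := by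
  simp only [dotProduct, Matrix.mulVec, dotProduct, gram, colMul]
  have e : ∀ r : Fin m, (∑ i : J, Φ r i.1 * x i) ^ 2
      = ∑ i : J, ∑ j : J, x i * (Φ r i.1 * Φ r j.1 * x j) := by
    intro r
    rw [sq, Finset.sum_mul_sum]
    exact Finset.sum_congr rfl fun i _ => Finset.sum_congr rfl fun j _ => by ring
  rw [Finset.sum_congr rfl (fun r _ => e r), Finset.sum_comm]
  refine Finset.sum_congr rfl fun i _ => ?_
  rw [Finset.mul_sum, Finset.sum_comm]
  refine Finset.sum_congr rfl fun j _ => ?_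
  rw [Finset.sum_mul, Finset.mul_sum]

lemma gram_hermitian (Φ : Matrix (Fin m) (Fin N) ℝ) (J : Finset (Fin N)) :
    (gram Φ J).IsHermitian := by
  ext i j
  simp only [Matrix.conjTranspose_apply, gram, star_trivial]
  exact Finset.sum_congr rfl fun r _ => by ring

lemma gram_det_isUnit {Φ : Matrix (Fin m) (Fin N) ℝ} {J : Finset (Fin N)} {δ : ℝ}
    {K : ℕ} (hJ : J.card ≤ K) (hrip : IsRIP Φ K δ) (hδ1 : δ < 1) :
    IsUnit (gram Φ J).det := by
  have hpd : (gram Φ J).PosDef := by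
    refine Matrix.PosDef.of_dotProduct_mulVec_pos (gram_hermitian Φ J) fun x hx => ?_
    have hsx : star x = x := by
      funext i; simp [star_trivial]
    rw [hsx, gram_dot]
    have hlow := (hrip J hJ x).1
    have hxpos : 0 < ∑ i, x i ^ 2 := by
      obtain ⟨i, hi⟩ := Function.ne_iff.mp hx
      refine Finset.sum_pos' (fun j _ => sq_nonneg _) ⟨i, Finset.mem_univ i, ?_⟩
      exact lt_of_le_of_ne (sq_nonneg _) (fun h => hi (by
        have := pow_eq_zero_iff (two_ne_zero) |>.mp h.symm; exact this))
    calc (0:ℝ) < (1 - δ) * ∑ i, x i ^ 2 := mul_pos (by linarith) hxpos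
      _ ≤ _ := hlow
  exact hpd.det_pos.ne'.isUnit

lemma colTMul_colMul (Φ : Matrix (Fin m) (Fin N) ℝ) (J : Finset (Fin N)) (q : J → ℝ) :
    colTMul Φ J (colMul Φ J q) = (gram Φ J) *ᵥ q := by
  funext i
  simp only [colTMul, colMul, Matrix.mulVec, dotProduct, gram,
    Finset.mul_sum, Finset.sum_mul]
  rw [Finset.sum_comm]
  exact Finset.sum_congr rfl fun j _ =>
    Finset.sum_congr rfl fun r _ => by ring

lemma colTMul_projVec {Φ : Matrix (Fin m) (Fin N) ℝ} {J : Finset (Fin N)}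
    (hdet : IsUnit (gram Φ J).det) (y : Fin m → ℝ) :
    colTMul Φ J (projVec Φ J y) = colTMul Φ J y := by
  rw [projVec, colTMul_colMul, projCoeff, Matrix.mulVec_mulVec,
    Matrix.mul_nonsing_inv _ hdet, Matrix.one_mulVec]

lemma dot_colMul (Φ : Matrix (Fin m) (Fin N) ℝ) (J : Finset (Fin N)) (q : J → ℝ)
    (z : Fin m → ℝ) :
    ∑ r, colMul Φ J q r * z r = ∑ i, q i * colTMul Φ J z i := by
  simp only [colMul, colTMul, Finset.sum_mul]
  rw [Finset.sum_comm]
  refine Finset.sum_congr rfl fun i _ => ?_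
  rw [Finset.mul_sum]
  exact Finset.sum_congr rfl fun r _ => by ring

/-- The admissible RIP set is nonempty. -/
lemma rip_set_nonempty (Φ : Matrix (Fin m) (Fin N) ℝ) (K : ℕ) :
    {δ : ℝ | 0 ≤ δ ∧ IsRIP Φ K δ}.Nonempty := by
  set T : ℝ := ∑ r, ∑ n, Φ r n ^ 2 with hT
  have hT0 : 0 ≤ T := by positivity
  refine ⟨1 + T, by linarith, fun S hS q => ?_⟩
  have hq0 : 0 ≤ ∑ i, q i ^ 2 := by positivity
  constructor
  · have : (1 - (1 + T)) * ∑ i, q i ^ 2 ≤ 0 := by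
      apply mul_nonpos_of_nonpos_of_nonneg (by linarith) hq0
    calc (1 - (1 + T)) * ∑ i, q i ^ 2 ≤ 0 := this
      _ ≤ ∑ r, (colMul Φ S q r) ^ 2 := by positivity
  · have hCS : ∀ r, (colMul Φ S q r) ^ 2 ≤ (∑ i : S, Φ r i.1 ^ 2) * ∑ i, q i ^ 2 := by
      intro r
      exact Finset.sum_mul_sq_le_sq_mul_sq Finset.univ (fun i : S => Φ r i.1) q
    have hsub : ∀ r : Fin m, (∑ i : S, Φ r i.1 ^ 2) ≤ ∑ n, Φ r n ^ 2 := by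
      intro r
      rw [Finset.sum_coe_sort S (fun n => Φ r n ^ 2)]
      exact Finset.sum_le_sum_of_subset_of_nonneg (Finset.subset_univ S)
        (fun n _ _ => sq_nonneg _)
    calc ∑ r, (colMul Φ S q r) ^ 2
        ≤ ∑ r, (∑ n, Φ r n ^ 2) * ∑ i, q i ^ 2 := by
          refine Finset.sum_le_sum fun r _ => (hCS r).trans ?_
          exact mul_le_mul_of_nonneg_right (hsub r) hq0
      _ = T * ∑ i, q i ^ 2 := by rw [← Finset.sum_mul]
      _ ≤ (1 + (1 + T)) * ∑ i, q i ^ 2 := by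
          apply mul_le_mul_of_nonneg_right (by linarith) hq0

lemma ripConst_nonneg (Φ : Matrix (Fin m) (Fin N) ℝ) (K : ℕ) : 0 ≤ ripConst Φ K :=
  le_csInf (rip_set_nonempty Φ K) fun _ h => h.1

lemma rip_set_bddBelow (Φ : Matrix (Fin m) (Fin N) ℝ) (K : ℕ) :
    BddBelow {δ : ℝ | 0 ≤ δ ∧ IsRIP Φ K δ} :=
  ⟨0, fun _ h => h.1⟩

lemma ripConst_mono (Φ : Matrix (Fin m) (Fin N) ℝ) {K K' : ℕ} (h : K' ≤ K) :
    ripConst Φ K' ≤ ripConst Φ K := by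
  apply csInf_le_csInf (rip_set_bddBelow Φ K') (rip_set_nonempty Φ K)
  rintro δ ⟨h0, hrip⟩
  exact ⟨h0, fun S hS q => hrip S (hS.trans h) q⟩

lemma le_inf_mul {S : Set ℝ} (hne : S.Nonempty) {X c : ℝ} (hc : 0 ≤ c)
    (h : ∀ δ ∈ S, X ≤ δ * c) : X ≤ sInf S * c := by
  rcases eq_or_lt_of_le hc with h0 | h0
  · obtain ⟨δ, hδ⟩ := hne
    have := h δ hδ
    rw [← h0] at this ⊢
    simpa using this
  · have : ∀ δ ∈ S, X / c ≤ δ := fun δ hδ => (div_le_iff₀ h0).mpr (h δ hδ)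
    have h2 := le_csInf hne this
    linarith [(div_le_iff₀ h0).mp h2]

lemma one_sub_inf_mul_le {S : Set ℝ} (hne : S.Nonempty) {Y c : ℝ} (hc : 0 ≤ c)
    (hY : 0 ≤ Y) (h : ∀ δ ∈ S, (1 - δ) * c ≤ Y) : (1 - sInf S) * c ≤ Y := by
  rcases eq_or_lt_of_le hc with h0 | h0
  · rw [← h0, mul_zero]; exact hY
  · have : ∀ δ ∈ S, (c - Y) / c ≤ δ := by
      intro δ hδ
      rw [div_le_iff₀ h0]
      linarith [h δ hδ]
    have h2 := le_csInf hne this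
    rw [div_le_iff₀ h0] at h2
    nlinarith

end Aux2

theorem projection_norm_bound {m N : ℕ} (Φ : Matrix (Fin m) (Fin N) ℝ)
    (I J : Finset (Fin N)) (hIJ : Disjoint I J)
    (hδ : ripConst Φ (I.card + J.card) < 1)
    (y : Fin m → ℝ) (hy : ∃ a : I → ℝ, y = colMul Φ I a) :
    l2norm (projVec Φ J y) ≤
      ripConst Φ (I.card + J.card) / (1 - ripConst Φ (max I.card J.card)) * l2norm y := by
  obtain ⟨a, hy_eq⟩ := hy
  have hMK : max I.card J.card ≤ I.card + J.card :=
    max_le (Nat.le_add_right _ _) (Nat.le_add_left _ _)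
  have hδM : ripConst Φ (max I.card J.card) < 1 :=
    lt_of_le_of_lt (ripConst_mono Φ hMK) hδ
  obtain ⟨δ₀, hδ₀S, hδ₀1⟩ :=
    exists_lt_of_csInf_lt (rip_set_nonempty Φ (max I.card J.card)) hδM
  have hdet : IsUnit (gram Φ J).det :=
    gram_det_isUnit (le_max_right _ _) hδ₀S.2 hδ₀1
  have horth : ∑ r, (projVec Φ J y r) ^ 2 = ∑ r, projVec Φ J y r * y r := by
    have e1 : ∑ r, (projVec Φ J y r) ^ 2
        = ∑ r, colMul Φ J (projCoeff Φ J y) r * projVec Φ J y r :=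
      Finset.sum_congr rfl fun r _ => by rw [projVec]; ring
    rw [e1, dot_colMul, colTMul_projVec hdet,
      show (∑ r, projVec Φ J y r * y r) = ∑ r, colMul Φ J (projCoeff Φ J y) r * y r from rfl,
      dot_colMul]
  have hyp2 : (0:ℝ) ≤ ∑ r, (projVec Φ J y r) ^ 2 := by positivity
  have hy2 : (0:ℝ) ≤ ∑ r, y r ^ 2 := by positivity
  have hb2 : (0:ℝ) ≤ ∑ i, projCoeff Φ J y i ^ 2 := by positivity
  have ha2 : (0:ℝ) ≤ ∑ i, a i ^ 2 := by positivity
  have hp0 := Real.sqrt_nonneg (∑ r, (projVec Φ J y r) ^ 2)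
  have ht0 := Real.sqrt_nonneg (∑ r, y r ^ 2)
  have hu0 := Real.sqrt_nonneg (∑ i, projCoeff Φ J y i ^ 2)
  have hv0 := Real.sqrt_nonneg (∑ i, a i ^ 2)
  have hd0 : 0 ≤ ripConst Φ (I.card + J.card) := ripConst_nonneg Φ _
  have hcpos : 0 < 1 - ripConst Φ (max I.card J.card) := by linarith
  have h1 : ∑ r, (projVec Φ J y r) ^ 2
      ≤ ripConst Φ (I.card + J.card) *
        (Real.sqrt (∑ i, projCoeff Φ J y i ^ 2) * Real.sqrt (∑ i, a i ^ 2)) := by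
    refine le_inf_mul (rip_set_nonempty Φ (I.card + J.card))
      (mul_nonneg hu0 hv0) ?_
    rintro δ ⟨hδ0, hδrip⟩
    have hc := rip_cross hδ0 hδrip hIJ.symm
      (by omega : J.card + I.card ≤ I.card + J.card)
      (extv J (projCoeff Φ J y)) (extv I a)
    have e : ∑ r, (projVec Φ J y r) ^ 2
        = ∑ r, (∑ n ∈ J, Φ r n * extv J (projCoeff Φ J y) n)
            * (∑ n ∈ I, Φ r n * extv I a n) := by
      rw [horth]
      refine Finset.sum_congr rfl fun r _ => ?_
      rw [show projVec Φ J y r = ∑ n ∈ J, Φ r n * extv J (projCoeff Φ J y) n from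
          colMul_eq_sum Φ J _ r,
        show y r = ∑ n ∈ I, Φ r n * extv I a n from by
          rw [hy_eq]; exact colMul_eq_sum Φ I a r]
    rw [e]
    refine le_trans (le_abs_self _) (le_trans hc (le_of_eq ?_))
    rw [← sumsq_eq_sum J (projCoeff Φ J y), ← sumsq_eq_sum I a, mul_assoc]
  have h2 : (1 - ripConst Φ (max I.card J.card)) * ∑ i, projCoeff Φ J y i ^ 2
      ≤ ∑ r, (projVec Φ J y r) ^ 2 := by
    refine one_sub_inf_mul_le (rip_set_nonempty Φ _) hb2 hyp2 ?_
    rintro δ ⟨hδ0, hδrip⟩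
    exact (hδrip J (le_max_right _ _) (projCoeff Φ J y)).1
  have h3 : (1 - ripConst Φ (max I.card J.card)) * ∑ i, a i ^ 2
      ≤ ∑ r, y r ^ 2 := by
    refine one_sub_inf_mul_le (rip_set_nonempty Φ _) ha2 hy2 ?_
    rintro δ ⟨hδ0, hδrip⟩
    calc (1 - δ) * ∑ i, a i ^ 2 ≤ ∑ r, (colMul Φ I a r) ^ 2 :=
        (hδrip I (le_max_left _ _) a).1
      _ = ∑ r, y r ^ 2 := by rw [hy_eq]
  set c : ℝ := ripConst Φ (max I.card J.card) with hcdef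
  set dK : ℝ := ripConst Φ (I.card + J.card) with hddef
  set su : ℝ := Real.sqrt (∑ i, projCoeff Φ J y i ^ 2) with hsu
  set sv : ℝ := Real.sqrt (∑ i, a i ^ 2) with hsv
  set sp : ℝ := Real.sqrt (∑ r, (projVec Φ J y r) ^ 2) with hsp
  set st : ℝ := Real.sqrt (∑ r, y r ^ 2) with hst
  have husq : su ^ 2 = ∑ i, projCoeff Φ J y i ^ 2 := by rw [hsu]; exact Real.sq_sqrt hb2
  have hvsq : sv ^ 2 = ∑ i, a i ^ 2 := by rw [hsv]; exact Real.sq_sqrt ha2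
  have hpsq : sp ^ 2 = ∑ r, (projVec Φ J y r) ^ 2 := by rw [hsp]; exact Real.sq_sqrt hyp2
  have htsq : st ^ 2 = ∑ r, y r ^ 2 := by rw [hst]; exact Real.sq_sqrt hy2
  have h1' : sp ^ 2 ≤ dK * (su * sv) := by rw [hpsq]; exact h1
  have h2' : (1 - c) * su ^ 2 ≤ sp ^ 2 := by rw [husq, hpsq]; exact h2
  have h3' : (1 - c) * sv ^ 2 ≤ st ^ 2 := by rw [hvsq, htsq]; exact h3
  have hstep : (1 - c) * (su * sv) ≤ sp * st := by
    have hm1 : ((1 - c) * su ^ 2) * ((1 - c) * sv ^ 2) ≤ sp ^ 2 * st ^ 2 :=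
      mul_le_mul h2' h3' (mul_nonneg hcpos.le (sq_nonneg sv)) (sq_nonneg sp)
    have hm : ((1 - c) * (su * sv)) ^ 2 ≤ (sp * st) ^ 2 := by
      calc ((1 - c) * (su * sv)) ^ 2 = ((1 - c) * su ^ 2) * ((1 - c) * sv ^ 2) := by ring
        _ ≤ sp ^ 2 * st ^ 2 := hm1
        _ = (sp * st) ^ 2 := by ring
    have hle := Real.sqrt_le_sqrt hm
    rwa [Real.sqrt_sq (mul_nonneg hcpos.le (mul_nonneg hu0 hv0)),
      Real.sqrt_sq (mul_nonneg hp0 ht0)] at hle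
  have hl2p : l2norm (projVec Φ J y) = sp := by rw [hsp]; rfl
  have hl2y : l2norm y = st := by rw [hst]; rfl
  rw [hl2p, hl2y]
  rcases eq_or_lt_of_le hp0 with h0 | h0
  · rw [← h0]
    exact mul_nonneg (div_nonneg hd0 hcpos.le) ht0
  · have huv : su * sv ≤ sp * st / (1 - c) := by
      rw [le_div_iff₀ hcpos]
      linarith [hstep]
    have key : sp * sp ≤ (dK / (1 - c) * st) * sp := by
      calc sp * sp = sp ^ 2 := by ring
        _ ≤ dK * (su * sv) := h1'
        _ ≤ dK * (sp * st / (1 - c)) := mul_le_mul_of_nonneg_left huv hd0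
        _ = (dK / (1 - c) * st) * sp := by ring
    exact le_of_mul_le_mul_right key h0
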